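/- Let w : [0,1] → ℝ be continuous, not affine on [0,1/2] and not affine on [1/2,1] (i.e., there do not exist a, b ∈ ℝ with w(s) = a + b·s for all s ∈ [0,1/2], and likewise for [1/2,1]). For any bounded function v : [0,1] → ℝ define Φ(v)(t) := (v(t) − t·v(1)) / (sup_{s ∈ [0,t]} |v(s) − (s/t)·v(t)| + sup_{s ∈ [t,1]} |v(1) − v(s) − ((1−s)/(1−t))·(v(1) − v(t))|), with the conventions s/t := 0 when t = 0, (1−s)/(1−t) := 0 when t = 1, and division by zero yielding 0. Then Φ is continuous at w with respect to the supremum metric: for every ε > 0 there exists δ > 0 such that every bounded v : [0,1] → ℝ with sup_{t ∈ [0,1]} |v(t) − w(t)| < δ satisfies sup_{t ∈ [0,1]} |Φ(v)(t) − Φ(w)(t)| < ε. -/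

import Mathlib

/-- The supremum-type self-normalized ratio mapping.  Lean's convention `x / 0 = 0`
implements the conventions `s/t := 0` for `t = 0`, `(1-s)/(1-t) := 0` for `t = 1`, and
division by a zero denominator yielding `0`. -/
noncomputable def snRatioSup (v : ℝ → ℝ) (t : ℝ) : ℝ :=
  (v t - t * v 1) /
    (sSup ((fun s => |v s - s / t * v t|) '' Set.Icc 0 t)
      + sSup ((fun s => |v 1 - v s - (1 - s) / (1 - t) * (v 1 - v t)|) '' Set.Icc t 1))

open Set

private lemma bdd_img {f : ℝ → ℝ} {S : Set ℝ} {B : ℝ} (h : ∀ x ∈ S, f x ≤ B) :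
    BddAbove (f '' S) := ⟨B, by rintro _ ⟨x, hx, rfl⟩; exact h x hx⟩

private lemma le_sSup_img {f : ℝ → ℝ} {S : Set ℝ} {B : ℝ} (h : ∀ x ∈ S, f x ≤ B) {x : ℝ}
    (hx : x ∈ S) : f x ≤ sSup (f '' S) := le_csSup (bdd_img h) ⟨x, hx, rfl⟩

private lemma sup_le_sup_add {f g : ℝ → ℝ} {S : Set ℝ} (hS : S.Nonempty) {B d : ℝ}
    (hg : ∀ x ∈ S, g x ≤ B) (h : ∀ x ∈ S, f x ≤ g x + d) :
    sSup (f '' S) ≤ sSup (g '' S) + d := by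
  apply csSup_le (hS.image f)
  rintro _ ⟨x, hx, rfl⟩
  exact (h x hx).trans (add_le_add_left (le_sSup_img hg hx) d)

private lemma abs_sup_sub_sup_le {f g : ℝ → ℝ} {S : Set ℝ} (hS : S.Nonempty) {Bf Bg d : ℝ}
    (hf : ∀ x ∈ S, f x ≤ Bf) (hg : ∀ x ∈ S, g x ≤ Bg)
    (h : ∀ x ∈ S, |f x - g x| ≤ d) :
    |sSup (f '' S) - sSup (g '' S)| ≤ d := by
  rw [abs_sub_le_iff]
  constructor
  · have := sup_le_sup_add (f := f) hS hg (fun x hx => by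
      have hx' := h x hx; rw [abs_sub_le_iff] at hx'; linarith [hx'.1])
    linarith
  · have := sup_le_sup_add (f := g) hS hf (fun x hx => by
      have hx' := h x hx; rw [abs_sub_le_iff] at hx'; linarith [hx'.2])
    linarith

private lemma affine_gap (w : ℝ → ℝ) (p q : ℝ) (hp : 0 ≤ p) (hq : q ≤ 1) (hpq : p < q)
    {Kw : ℝ} (hKw : ∀ x ∈ Icc (0:ℝ) 1, |w x| ≤ Kw)
    (h : ¬ ∃ a b : ℝ, ∀ s ∈ Set.Icc p q, w s = a + b * s) :
    ∃ c > 0, ∀ a b : ℝ, c ≤ sSup ((fun s => |w s - (a + b * s)|) '' Set.Icc p q) := by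
  have hKw0 : 0 ≤ Kw := (abs_nonneg _).trans (hKw 0 (by norm_num))
  have hsub : Icc p q ⊆ Icc 0 1 := Icc_subset_Icc hp hq
  set φ : ℝ × ℝ → ℝ := fun x => sSup ((fun s => |w s - (x.1 + x.2 * s)|) '' Icc p q) with hφ
  have hne : (Icc p q).Nonempty := nonempty_Icc.2 hpq.le
  have hqp : 0 < q - p := by linarith
  -- pointwise bound for each x
  have hbd : ∀ x : ℝ × ℝ, ∀ s ∈ Icc p q, |w s - (x.1 + x.2 * s)| ≤ Kw + |x.1| + |x.2| := by
    intro x s hs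
    have hs' : s ∈ Icc (0:ℝ) 1 := hsub hs
    have habs : |s| ≤ 1 := abs_le.2 ⟨by linarith [hs'.1], hs'.2⟩
    calc |w s - (x.1 + x.2 * s)| ≤ |w s| + |x.1 + x.2 * s| := abs_sub _ _
    _ ≤ |w s| + (|x.1| + |x.2| * |s|) := by
        have := abs_add_le x.1 (x.2 * s); rw [abs_mul] at this; linarith
    _ ≤ Kw + (|x.1| + |x.2| * 1) := by
        have h1 := hKw s hs'
        have h2 : |x.2| * |s| ≤ |x.2| * 1 := by
          apply mul_le_mul_of_nonneg_left habs (abs_nonneg _)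
        linarith
    _ = Kw + |x.1| + |x.2| := by ring
  -- positivity
  have hpos : ∀ x : ℝ × ℝ, 0 < φ x := by
    intro x
    by_contra hc
    push_neg at hc
    apply h
    refine ⟨x.1, x.2, fun s hs => ?_⟩
    have h1 : |w s - (x.1 + x.2 * s)| ≤ φ x := le_sSup_img (hbd x) hs
    have h2 : (0:ℝ) ≤ |w s - (x.1 + x.2 * s)| := abs_nonneg _
    have : w s - (x.1 + x.2 * s) = 0 := abs_eq_zero.1 (le_antisymm (h1.trans hc) h2)
    linarith
  -- Lipschitz continuity
  have hlip : ∀ x y : ℝ × ℝ, |φ x - φ y| ≤ |x.1 - y.1| + |x.2 - y.2| := by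
    intro x y
    apply abs_sup_sub_sup_le hne (hbd x) (hbd y)
    intro s hs
    have hs' : s ∈ Icc (0:ℝ) 1 := hsub hs
    have habs : |s| ≤ 1 := abs_le.2 ⟨by linarith [hs'.1], hs'.2⟩
    have key : |w s - (x.1 + x.2 * s)| - |w s - (y.1 + y.2 * s)| ≤ |x.1 - y.1| + |x.2 - y.2|
        ∧ |w s - (y.1 + y.2 * s)| - |w s - (x.1 + x.2 * s)| ≤ |x.1 - y.1| + |x.2 - y.2| := by
      constructor <;>
      · have h1 := abs_sub_abs_le_abs_sub (w s - (x.1 + x.2 * s)) (w s - (y.1 + y.2 * s))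
        have h1' := abs_sub_abs_le_abs_sub (w s - (y.1 + y.2 * s)) (w s - (x.1 + x.2 * s))
        have h2 : |(w s - (x.1 + x.2 * s)) - (w s - (y.1 + y.2 * s))| ≤ |x.1 - y.1| + |x.2 - y.2| := by
          have e : (w s - (x.1 + x.2 * s)) - (w s - (y.1 + y.2 * s)) = (y.1 - x.1) + (y.2 - x.2) * s := by ring
          rw [e]
          calc |(y.1 - x.1) + (y.2 - x.2) * s| ≤ |y.1 - x.1| + |(y.2 - x.2) * s| := abs_add_le _ _
          _ ≤ |y.1 - x.1| + |y.2 - x.2| * 1 := by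
              rw [abs_mul]
              have := mul_le_mul_of_nonneg_left habs (abs_nonneg (y.2 - x.2)); linarith
          _ = |x.1 - y.1| + |x.2 - y.2| := by rw [abs_sub_comm y.1 x.1, abs_sub_comm y.2 x.2]; ring
        have h2' : |(w s - (y.1 + y.2 * s)) - (w s - (x.1 + x.2 * s))| ≤ |x.1 - y.1| + |x.2 - y.2| := by
          rw [abs_sub_comm]; exact h2
        linarith
    rw [abs_sub_le_iff]
    exact ⟨key.1, key.2⟩
  have hcont : Continuous φ := by
    apply LipschitzWith.continuous (K := 2) (f := φ)
    apply LipschitzWith.of_dist_le_mul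
    intro x y
    rw [Real.dist_eq]
    have := hlip x y
    have d1 : |x.1 - y.1| ≤ dist x y := by
      rw [Prod.dist_eq]; exact le_trans (le_of_eq (Real.dist_eq x.1 y.1).symm) (le_max_left _ _)
    have d2 : |x.2 - y.2| ≤ dist x y := by
      rw [Prod.dist_eq]; exact le_trans (le_of_eq (Real.dist_eq x.2 y.2).symm) (le_max_right _ _)
    push_cast
    linarith
  -- coercivity
  set R : ℝ := (1 + Kw) + (2 * (1 + Kw) / (q - p)) + 1 with hR
  have hR0 : 0 ≤ R := by
    have : 0 ≤ 2 * (1 + Kw) / (q - p) := by positivity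
    simp only [hR]; linarith
  have hcoerc : ∀ x : ℝ × ℝ, φ x < 1 → ‖x‖ ≤ R := by
    intro x hx
    have e1 : |w p - (x.1 + x.2 * p)| ≤ φ x := le_sSup_img (hbd x) (left_mem_Icc.2 hpq.le)
    have e2 : |w q - (x.1 + x.2 * q)| ≤ φ x := le_sSup_img (hbd x) (right_mem_Icc.2 hpq.le)
    have hwp : |w p| ≤ Kw := hKw p ⟨hp, by linarith⟩
    have hwq : |w q| ≤ Kw := hKw q ⟨by linarith, hq⟩
    have f1 : |x.1 + x.2 * p| ≤ 1 + Kw := by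
      have := abs_sub_abs_le_abs_sub (x.1 + x.2 * p) (w p)
      rw [abs_sub_comm] at this
      linarith
    have f2 : |x.1 + x.2 * q| ≤ 1 + Kw := by
      have := abs_sub_abs_le_abs_sub (x.1 + x.2 * q) (w q)
      rw [abs_sub_comm] at this
      linarith
    have fb : |x.2| * (q - p) ≤ 2 * (1 + Kw) := by
      have e : x.2 * (q - p) = (x.1 + x.2 * q) - (x.1 + x.2 * p) := by ring
      have : |x.2 * (q - p)| ≤ 2 * (1 + Kw) := by
        rw [e]
        calc |(x.1 + x.2 * q) - (x.1 + x.2 * p)| ≤ |x.1 + x.2 * q| + |x.1 + x.2 * p| := abs_sub _ _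
        _ ≤ 2 * (1 + Kw) := by linarith
      rwa [abs_mul, abs_of_pos hqp] at this
    have hb : |x.2| ≤ 2 * (1 + Kw) / (q - p) := (le_div_iff₀ hqp).2 fb
    have ha : |x.1| ≤ (1 + Kw) + 2 * (1 + Kw) / (q - p) := by
      have hpabs : |p| ≤ 1 := abs_le.2 ⟨by linarith, by linarith⟩
      have : |x.1| ≤ |x.1 + x.2 * p| + |x.2 * p| := by
        have := abs_add_le (x.1 + x.2 * p) (-(x.2 * p))
        simp only [add_neg_cancel_right, abs_neg] at this
        linarith
      rw [abs_mul] at this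
      nlinarith [abs_nonneg x.2, abs_nonneg (x.2 * p)]
    rw [Prod.norm_def]
    simp only [Real.norm_eq_abs]
    apply max_le
    · simp only [hR]; linarith
    · simp only [hR]; linarith
  obtain ⟨x0, hx0, hmin⟩ := (isCompact_closedBall (0 : ℝ × ℝ) R).exists_isMinOn
    ⟨0, Metric.mem_closedBall_self hR0⟩ hcont.continuousOn
  refine ⟨min (φ x0) 1, lt_min (hpos x0) one_pos, fun a b => ?_⟩
  by_cases hx : ‖((a, b) : ℝ × ℝ)‖ ≤ R
  · have : φ x0 ≤ φ (a, b) := hmin (mem_closedBall_zero_iff.2 hx)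
    exact le_trans (min_le_left _ _) this
  · have : ¬ φ (a, b) < 1 := fun hlt => hx (hcoerc _ hlt)
    push_neg at this
    exact le_trans (min_le_right _ _) this



set_option maxHeartbeats 2000000 in
/-- The supremum-type self-normalized ratio mapping is continuous (w.r.t. the supremum metric
on `[0,1]`, over bounded functions) at every continuous `w` that is not affine on `[0,1/2]`
nor on `[1/2,1]`. -/
theorem stmt_4 (w : ℝ → ℝ) (hw : ContinuousOn w (Set.Icc 0 1))
    (h1 : ¬ ∃ a b : ℝ, ∀ s ∈ Set.Icc (0 : ℝ) (1/2), w s = a + b * s)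
    (h2 : ¬ ∃ a b : ℝ, ∀ s ∈ Set.Icc (1/2 : ℝ) 1, w s = a + b * s) :
    ∀ ε > 0, ∃ δ > 0, ∀ v : ℝ → ℝ,
      (∃ M : ℝ, ∀ t ∈ Set.Icc (0 : ℝ) 1, |v t| ≤ M) →
      sSup ((fun t => |v t - w t|) '' Set.Icc (0 : ℝ) 1) < δ →
      sSup ((fun t => |snRatioSup v t - snRatioSup w t|) '' Set.Icc (0 : ℝ) 1) < ε := by
  intro ε hε
  obtain ⟨K, hKn⟩ := (isCompact_Icc (a := (0:ℝ)) (b := 1)).exists_bound_of_continuousOn hw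
  have hK : ∀ t ∈ Icc (0:ℝ) 1, |w t| ≤ K := by
    intro t ht; simpa [Real.norm_eq_abs] using hKn t ht
  have hK0 : 0 ≤ K := (abs_nonneg _).trans (hK 0 (by norm_num))
  obtain ⟨c1, hc1, H1⟩ := affine_gap w 0 (1/2) le_rfl (by norm_num) (by norm_num) hK h1
  obtain ⟨c2, hc2, H2⟩ := affine_gap w (1/2) 1 (by norm_num) le_rfl (by norm_num) hK h2
  set c := min c1 c2 with hcdef
  have hc0 : 0 < c := lt_min hc1 hc2
  have hcle1 : c ≤ c1 := min_le_left _ _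
  have hcle2 : c ≤ c2 := min_le_right _ _
  -- ratio bounds
  have hrat : ∀ t ∈ Icc (0:ℝ) 1, ∀ s ∈ Icc (0:ℝ) t, 0 ≤ s / t ∧ s / t ≤ 1 := by
    intro t ht s hs
    rcases eq_or_lt_of_le ht.1 with h | h
    · have hs0 : s = 0 := le_antisymm (hs.2.trans_eq h.symm) hs.1
      simp [hs0]
    · exact ⟨div_nonneg hs.1 h.le, div_le_one_of_le₀ hs.2 h.le⟩
  have hrat2 : ∀ t ∈ Icc (0:ℝ) 1, ∀ s ∈ Icc t 1, 0 ≤ (1-s)/(1-t) ∧ (1-s)/(1-t) ≤ 1 := by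
    intro t ht s hs
    rcases eq_or_lt_of_le ht.2 with h | h
    · have hs1 : s = 1 := le_antisymm hs.2 (h ▸ hs.1)
      norm_num [hs1]
    · have h1t : 0 < 1 - t := by linarith
      exact ⟨div_nonneg (by linarith [hs.2]) h1t.le, div_le_one_of_le₀ (by linarith [hs.1]) h1t.le⟩
  -- pointwise bounds for the w-integrands
  have hAwpt : ∀ t ∈ Icc (0:ℝ) 1, ∀ s ∈ Icc (0:ℝ) t, |w s - s / t * w t| ≤ 2 * K := by
    intro t ht s hs
    obtain ⟨hr0, hr1⟩ := hrat t ht s hs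
    have hs1 : s ∈ Icc (0:ℝ) 1 := ⟨hs.1, hs.2.trans ht.2⟩
    have e1 := hK s hs1
    have e2 := hK t ht
    calc |w s - s / t * w t| ≤ |w s| + |s / t * w t| := abs_sub _ _
    _ ≤ 2 * K := by
        rw [abs_mul, abs_of_nonneg hr0]
        have h3 : s / t * |w t| ≤ 1 * |w t| := mul_le_mul_of_nonneg_right hr1 (abs_nonneg _)
        linarith
  have hBwpt : ∀ t ∈ Icc (0:ℝ) 1, ∀ s ∈ Icc t 1,
      |w 1 - w s - (1-s)/(1-t) * (w 1 - w t)| ≤ 4 * K := by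
    intro t ht s hs
    obtain ⟨hr0, hr1⟩ := hrat2 t ht s hs
    have hs1 : s ∈ Icc (0:ℝ) 1 := ⟨ht.1.trans hs.1, hs.2⟩
    have e1 := hK 1 (by norm_num)
    have e2 := hK s hs1
    have e3 := hK t ht
    calc |w 1 - w s - (1-s)/(1-t) * (w 1 - w t)|
        ≤ |w 1 - w s| + |(1-s)/(1-t) * (w 1 - w t)| := abs_sub _ _
    _ ≤ (|w 1| + |w s|) + 1 * |w 1 - w t| := by
        rw [abs_mul, abs_of_nonneg hr0]
        have h3 := mul_le_mul_of_nonneg_right hr1 (abs_nonneg (w 1 - w t))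
        have h4 := abs_sub (w 1) (w s)
        linarith
    _ ≤ 4 * K := by
        have h5 := abs_sub (w 1) (w t)
        linarith
  -- lower bound on the denominator for w
  have hDw : ∀ t ∈ Icc (0:ℝ) 1, c ≤ sSup ((fun s => |w s - s / t * w t|) '' Icc 0 t)
      + sSup ((fun s => |w 1 - w s - (1 - s) / (1 - t) * (w 1 - w t)|) '' Icc t 1) := by
    intro t ht
    have hAnn : 0 ≤ sSup ((fun s => |w s - s / t * w t|) '' Icc 0 t) :=
      Real.sSup_nonneg (by rintro _ ⟨s, hs, rfl⟩; exact abs_nonneg _)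
    have hBnn : 0 ≤ sSup ((fun s => |w 1 - w s - (1 - s) / (1 - t) * (w 1 - w t)|) '' Icc t 1) :=
      Real.sSup_nonneg (by rintro _ ⟨s, hs, rfl⟩; exact abs_nonneg _)
    by_cases ht2 : t ≤ 1/2
    · have hsub2 : Icc (1/2:ℝ) 1 ⊆ Icc t 1 := Icc_subset_Icc ht2 le_rfl
      have key : ∀ s ∈ Icc (1/2:ℝ) 1,
          (fun s => |w s - ((w 1 - (w 1 - w t) * (1 - t)⁻¹) + ((w 1 - w t) * (1 - t)⁻¹) * s)|) s
            = (fun s => |w 1 - w s - (1 - s) / (1 - t) * (w 1 - w t)|) s := by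
        intro s hs
        simp only
        rw [show w s - ((w 1 - (w 1 - w t) * (1 - t)⁻¹) + ((w 1 - w t) * (1 - t)⁻¹) * s)
            = -(w 1 - w s - (1 - s) / (1 - t) * (w 1 - w t)) by
          rw [div_eq_mul_inv]; ring, abs_neg]
      have h2' := H2 (w 1 - (w 1 - w t) * (1 - t)⁻¹) ((w 1 - w t) * (1 - t)⁻¹)
      rw [Set.image_congr key] at h2'
      have hmono : sSup ((fun s => |w 1 - w s - (1-s)/(1-t) * (w 1 - w t)|) '' Icc (1/2:ℝ) 1)
          ≤ sSup ((fun s => |w 1 - w s - (1 - s) / (1 - t) * (w 1 - w t)|) '' Icc t 1) :=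
        csSup_le_csSup (bdd_img (hBwpt t ht)) ((nonempty_Icc.2 (by norm_num)).image _)
          (image_mono hsub2)
      linarith [h2'.trans hmono]
    · push_neg at ht2
      have hsub1 : Icc (0:ℝ) (1/2) ⊆ Icc 0 t := Icc_subset_Icc le_rfl ht2.le
      have key : ∀ s ∈ Icc (0:ℝ) (1/2),
          (fun s => |w s - (0 + (w t * t⁻¹) * s)|) s = (fun s => |w s - s / t * w t|) s := by
        intro s hs
        simp only
        rw [show w s - (0 + (w t * t⁻¹) * s) = w s - s / t * w t by rw [div_eq_mul_inv]; ring]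
      have h1' := H1 0 (w t * t⁻¹)
      rw [Set.image_congr key] at h1'
      have hmono : sSup ((fun s => |w s - s / t * w t|) '' Icc (0:ℝ) (1/2))
          ≤ sSup ((fun s => |w s - s / t * w t|) '' Icc 0 t) :=
        csSup_le_csSup (bdd_img (hAwpt t ht)) ((nonempty_Icc.2 (by norm_num)).image _)
          (image_mono hsub1)
      linarith [h1'.trans hmono]
  -- choose δ
  set δ := min (c/12) (ε * (c*c) / (96*K + 1)) with hδdef
  have hδ0 : 0 < δ := lt_min (by positivity) (by positivity)
  refine ⟨δ, hδ0, ?_⟩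
  intro v hMex hsup
  obtain ⟨M, hM⟩ := hMex
  have hM0 : 0 ≤ M := (abs_nonneg _).trans (hM 0 (by norm_num))
  have hδc : δ ≤ c/12 := min_le_left _ _
  have hδε : δ * (96*K + 1) ≤ ε * (c*c) := by
    have h' : δ ≤ ε * (c*c) / (96*K+1) := min_le_right _ _
    rwa [le_div_iff₀ (by positivity)] at h'
  -- pointwise closeness
  have hvw : ∀ t ∈ Icc (0:ℝ) 1, |v t - w t| ≤ δ := by
    intro t ht
    have hb : ∀ x ∈ Icc (0:ℝ) 1, |v x - w x| ≤ M + K :=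
      fun x hx => (abs_sub _ _).trans (add_le_add (hM x hx) (hK x hx))
    exact (le_sSup_img (f := fun t => |v t - w t|) hb ht).trans hsup.le
  -- main pointwise estimate
  have main : ∀ t ∈ Icc (0:ℝ) 1, |snRatioSup v t - snRatioSup w t| ≤ ε/2 := by
    intro t ht
    have hneA : (Icc (0:ℝ) t).Nonempty := nonempty_Icc.2 ht.1
    have hneB : (Icc t 1).Nonempty := nonempty_Icc.2 ht.2
    -- pointwise bounds for v-integrands
    have hAvpt : ∀ s ∈ Icc (0:ℝ) t, |v s - s / t * v t| ≤ 2 * M := by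
      intro s hs
      obtain ⟨hr0, hr1⟩ := hrat t ht s hs
      have hs1 : s ∈ Icc (0:ℝ) 1 := ⟨hs.1, hs.2.trans ht.2⟩
      have e1 := hM s hs1
      have e2 := hM t ht
      calc |v s - s / t * v t| ≤ |v s| + |s / t * v t| := abs_sub _ _
      _ ≤ 2 * M := by
          rw [abs_mul, abs_of_nonneg hr0]
          have h3 : s / t * |v t| ≤ 1 * |v t| := mul_le_mul_of_nonneg_right hr1 (abs_nonneg _)
          linarith
    have hBvpt : ∀ s ∈ Icc t 1, |v 1 - v s - (1-s)/(1-t) * (v 1 - v t)| ≤ 4 * M := by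
      intro s hs
      obtain ⟨hr0, hr1⟩ := hrat2 t ht s hs
      have hs1 : s ∈ Icc (0:ℝ) 1 := ⟨ht.1.trans hs.1, hs.2⟩
      have e1 := hM 1 (by norm_num)
      have e2 := hM s hs1
      have e3 := hM t ht
      calc |v 1 - v s - (1-s)/(1-t) * (v 1 - v t)|
          ≤ |v 1 - v s| + |(1-s)/(1-t) * (v 1 - v t)| := abs_sub _ _
      _ ≤ (|v 1| + |v s|) + 1 * |v 1 - v t| := by
          rw [abs_mul, abs_of_nonneg hr0]
          have h3 := mul_le_mul_of_nonneg_right hr1 (abs_nonneg (v 1 - v t))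
          have h4 := abs_sub (v 1) (v s)
          linarith
      _ ≤ 4 * M := by
          have h5 := abs_sub (v 1) (v t)
          linarith
    set Av := sSup ((fun s => |v s - s / t * v t|) '' Icc 0 t) with hAvdef
    set Aw := sSup ((fun s => |w s - s / t * w t|) '' Icc 0 t) with hAwdef
    set Bv := sSup ((fun s => |v 1 - v s - (1 - s) / (1 - t) * (v 1 - v t)|) '' Icc t 1) with hBvdef
    set Bw := sSup ((fun s => |w 1 - w s - (1 - s) / (1 - t) * (w 1 - w t)|) '' Icc t 1) with hBwdef
    -- sup comparisons
    have hAd : |Av - Aw| ≤ 2*δ := by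
      apply abs_sup_sub_sup_le hneA hAvpt (hAwpt t ht)
      intro s hs
      obtain ⟨hr0, hr1⟩ := hrat t ht s hs
      have hs1 : s ∈ Icc (0:ℝ) 1 := ⟨hs.1, hs.2.trans ht.2⟩
      have d1 := hvw s hs1
      have d2 := hvw t ht
      calc |(|v s - s / t * v t|) - (|w s - s / t * w t|)|
          ≤ |(v s - s / t * v t) - (w s - s / t * w t)| := abs_abs_sub_abs_le_abs_sub _ _
      _ = |(v s - w s) - s / t * (v t - w t)| := by ring_nf
      _ ≤ |v s - w s| + |s / t * (v t - w t)| := abs_sub _ _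
      _ ≤ 2*δ := by
          rw [abs_mul, abs_of_nonneg hr0]
          have h3 : s / t * |v t - w t| ≤ 1 * |v t - w t| :=
            mul_le_mul_of_nonneg_right hr1 (abs_nonneg _)
          linarith
    have hBd : |Bv - Bw| ≤ 4*δ := by
      apply abs_sup_sub_sup_le hneB hBvpt (hBwpt t ht)
      intro s hs
      obtain ⟨hr0, hr1⟩ := hrat2 t ht s hs
      have hs1 : s ∈ Icc (0:ℝ) 1 := ⟨ht.1.trans hs.1, hs.2⟩
      have d1 := hvw s hs1
      have d2 := hvw t ht
      have d3 := hvw 1 (by norm_num)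
      calc |(|v 1 - v s - (1 - s) / (1 - t) * (v 1 - v t)|)
            - (|w 1 - w s - (1 - s) / (1 - t) * (w 1 - w t)|)|
          ≤ |(v 1 - v s - (1 - s) / (1 - t) * (v 1 - v t))
            - (w 1 - w s - (1 - s) / (1 - t) * (w 1 - w t))| := abs_abs_sub_abs_le_abs_sub _ _
      _ = |((v 1 - w 1) - (v s - w s)) - (1 - s) / (1 - t) * ((v 1 - w 1) - (v t - w t))| := by
          ring_nf
      _ ≤ |(v 1 - w 1) - (v s - w s)| + |(1 - s) / (1 - t) * ((v 1 - w 1) - (v t - w t))| :=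
          abs_sub _ _
      _ ≤ 4*δ := by
          rw [abs_mul, abs_of_nonneg hr0]
          have h3 : (1-s)/(1-t) * |(v 1 - w 1) - (v t - w t)| ≤ 1 * |(v 1 - w 1) - (v t - w t)| :=
            mul_le_mul_of_nonneg_right hr1 (abs_nonneg _)
          have h4 := abs_sub (v 1 - w 1) (v s - w s)
          have h5 := abs_sub (v 1 - w 1) (v t - w t)
          linarith
    -- bounds and positivity
    have hAwle : Aw ≤ 2*K := Real.sSup_le
      (by rintro _ ⟨s, hs, rfl⟩; exact hAwpt t ht s hs) (by positivity)
    have hBwle : Bw ≤ 4*K := Real.sSup_le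
      (by rintro _ ⟨s, hs, rfl⟩; exact hBwpt t ht s hs) (by positivity)
    have hAw0 : 0 ≤ Aw := Real.sSup_nonneg (by rintro _ ⟨s, hs, rfl⟩; exact abs_nonneg _)
    have hBw0 : 0 ≤ Bw := Real.sSup_nonneg (by rintro _ ⟨s, hs, rfl⟩; exact abs_nonneg _)
    have hDwc : c ≤ Aw + Bw := hDw t ht
    have hAd' := abs_le.1 hAd
    have hBd' := abs_le.1 hBd
    have hDv : c/2 ≤ Av + Bv := by linarith [hAd'.1, hBd'.1]
    have hDv0 : 0 < Av + Bv := lt_of_lt_of_le (by linarith) hDv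
    have hDw0 : 0 < Aw + Bw := lt_of_lt_of_le hc0 hDwc
    have hnum : |(v t - t * v 1) - (w t - t * w 1)| ≤ 2*δ := by
      have e : (v t - t*v 1) - (w t - t*w 1) = (v t - w t) - t*(v 1 - w 1) := by ring
      rw [e]
      have d1 := hvw t ht
      have d2 := hvw 1 (by norm_num)
      calc |(v t - w t) - t*(v 1 - w 1)| ≤ |v t - w t| + |t * (v 1 - w 1)| := abs_sub _ _
      _ ≤ 2*δ := by
          rw [abs_mul, abs_of_nonneg ht.1]
          have h3 : t * |v 1 - w 1| ≤ 1 * |v 1 - w 1| :=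
            mul_le_mul_of_nonneg_right ht.2 (abs_nonneg _)
          linarith
    have hnw : |w t - t * w 1| ≤ 2*K := by
      have e1 := hK t ht
      have e2 := hK 1 (by norm_num)
      calc |w t - t * w 1| ≤ |w t| + |t * w 1| := abs_sub _ _
      _ ≤ 2*K := by
          rw [abs_mul, abs_of_nonneg ht.1]
          have h3 : t * |w 1| ≤ 1 * |w 1| := mul_le_mul_of_nonneg_right ht.2 (abs_nonneg _)
          linarith
    -- the fraction identity
    have hfrac : snRatioSup v t - snRatioSup w t =
        (((v t - t * v 1) - (w t - t * w 1)) * (Aw + Bw)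
          + (w t - t * w 1) * ((Aw + Bw) - (Av + Bv))) / ((Av + Bv) * (Aw + Bw)) := by
      simp only [snRatioSup]
      rw [← hAvdef, ← hAwdef, ← hBvdef, ← hBwdef]
      field_simp
      ring
    rw [hfrac, abs_div, abs_of_pos (mul_pos hDv0 hDw0)]
    have hDd : |(Aw + Bw) - (Av + Bv)| ≤ 6*δ := by
      have e : (Aw + Bw) - (Av + Bv) = -(Av - Aw) + -(Bv - Bw) := by ring
      rw [e]
      calc |(-(Av - Aw)) + (-(Bv - Bw))| ≤ |(-(Av - Aw))| + |(-(Bv - Bw))| := abs_add_le _ _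
      _ = |Av - Aw| + |Bv - Bw| := by rw [abs_neg, abs_neg]
      _ ≤ 6*δ := by linarith
    have hnum2 : |((v t - t * v 1) - (w t - t * w 1)) * (Aw + Bw)
        + (w t - t * w 1) * ((Aw + Bw) - (Av + Bv))| ≤ 2*δ*(6*K) + 2*K*(6*δ) := by
      calc |((v t - t * v 1) - (w t - t * w 1)) * (Aw + Bw)
            + (w t - t * w 1) * ((Aw + Bw) - (Av + Bv))|
          ≤ |((v t - t * v 1) - (w t - t * w 1)) * (Aw + Bw)|
            + |(w t - t * w 1) * ((Aw + Bw) - (Av + Bv))| := abs_add_le _ _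
      _ = |(v t - t * v 1) - (w t - t * w 1)| * |Aw + Bw|
            + |w t - t * w 1| * |(Aw + Bw) - (Av + Bv)| := by rw [abs_mul, abs_mul]
      _ ≤ 2*δ*(6*K) + 2*K*(6*δ) := by
          have q1 : |(v t - t * v 1) - (w t - t * w 1)| * |Aw + Bw| ≤ 2*δ*(6*K) := by
            apply mul_le_mul hnum _ (abs_nonneg _) (by positivity)
            rw [abs_of_nonneg (by linarith)]
            linarith
          have q2 : |w t - t * w 1| * |(Aw + Bw) - (Av + Bv)| ≤ 2*K*(6*δ) := by
            apply mul_le_mul hnw hDd (abs_nonneg _) (by positivity)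
          linarith
    have hden : (c/2)*c ≤ (Av + Bv) * (Aw + Bw) :=
      mul_le_mul hDv hDwc hc0.le (by linarith)
    calc (|((v t - t * v 1) - (w t - t * w 1)) * (Aw + Bw)
          + (w t - t * w 1) * ((Aw + Bw) - (Av + Bv))|) / ((Av + Bv) * (Aw + Bw))
        ≤ (2*δ*(6*K) + 2*K*(6*δ)) / ((c/2)*c) :=
          div_le_div₀ (by positivity) hnum2 (by positivity) hden
    _ ≤ ε/2 := by
        rw [div_le_iff₀ (by positivity)]
        linarith [hδ0.le]
  have : sSup ((fun t => |snRatioSup v t - snRatioSup w t|) '' Icc (0:ℝ) 1) ≤ ε/2 :=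
    Real.sSup_le (by rintro _ ⟨t, ht, rfl⟩; exact main t ht) (by linarith)
  linarith
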